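/- Let I be a zero-dimensional ideal of R = ℂ[x₁,…,xₙ]. A point λ = (λ₁,…,λₙ) ∈ ℂⁿ lies in the zero locus V(I) if and only if there exists a nonzero element v of the quotient ring R/I such that T_i v = λ_i · v for every i = 1,…,n, where T_i is the companion endomorphism of multiplication by x_i. In other words, V(I) is exactly the set of vectors of simultaneous eigenvalues of the commuting family T₁,…,Tₙ (Stickelberger's theorem). -/
import Mathlib

set_option maxHeartbeats 1000000

/-- In a commutative Artinian ring, every maximal ideal has a nonzero annihilator:
there is a nonzero element killed by every element of the maximal ideal. -/
lemma exists_ne_zero_mul_eq_zero_of_isMaximal {A : Type*} [CommRing A] [IsArtinianRing A]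
    [IsNoetherianRing A] (m : Ideal A) [hm : m.IsMaximal] :
    ∃ v : A, v ≠ 0 ∧ ∀ a ∈ m, a * v = 0 := by
  classical
  -- localize at m
  let L := Localization.AtPrime m
  obtain ⟨k, hk⟩ : IsNilpotent (Ideal.jacobson (⊥ : Ideal L)) :=
    IsArtinianRing.isNilpotent_jacobson_bot
  have hjac : Ideal.jacobson (⊥ : Ideal L) = IsLocalRing.maximalIdeal L :=
    IsLocalRing.jacobson_eq_maximalIdeal ⊥ bot_ne_top
  have hmapk : (Ideal.map (algebraMap A L) m) ^ k = ⊥ := by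
    rw [IsLocalization.AtPrime.map_eq_maximalIdeal, ← hjac, hk, Submodule.zero_eq_bot]
  -- every element of m^k is killed by some s ∉ m
  have hkill : ∀ x ∈ m ^ k, ∃ s ∉ m, s * x = 0 := by
    intro x hx
    have h0 : algebraMap A L x = 0 := by
      have : algebraMap A L x ∈ (Ideal.map (algebraMap A L) m) ^ k := by
        rw [← Ideal.map_pow]
        exact Ideal.mem_map_of_mem _ hx
      rwa [hmapk, Ideal.mem_bot] at this
    obtain ⟨s, hs⟩ := (IsLocalization.map_eq_zero_iff m.primeCompl L x).mp h0
    exact ⟨(s : A), s.2, hs⟩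
  -- get a single s ∉ m with s • m^k = 0, using finite generation
  have hP : ∃ j : ℕ, ∃ s : A, s ∉ m ∧ ∀ x ∈ m ^ j, s * x = 0 := by
    obtain ⟨T, hT⟩ := IsNoetherian.noetherian (m ^ k)
    choose! f hf1 hf2 using hkill
    set s : A := ∏ t ∈ T, f t with hs
    refine ⟨k, s, ?_, ?_⟩
    · intro hmem
      obtain ⟨t, htT, ht⟩ := Ideal.IsPrime.prod_mem_iff.mp hmem
      have htm : (t : A) ∈ m ^ k := by
        rw [← hT]; exact Submodule.subset_span htT
      exact hf1 t htm ht
    · intro x hx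
      have hker : (m : Submodule A A) ^ k ≤ LinearMap.ker (LinearMap.mulLeft A s) := by
        rw [← hT, Submodule.span_le]
        intro y hy
        have hym : y ∈ m ^ k := by rw [← hT]; exact Submodule.subset_span hy
        simp only [SetLike.mem_coe, LinearMap.mem_ker, LinearMap.mulLeft_apply]
        rw [hs, ← Finset.mul_prod_erase T f hy, mul_comm (f y), mul_assoc, hf2 y hym, mul_zero]
      simpa using hker hx
  -- take a minimal such j
  obtain ⟨j, s, hsm, hskill⟩ := hP
  let Q : ℕ → Prop := fun j => ∃ s : A, s ∉ m ∧ ∀ x ∈ m ^ j, s * x = 0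
  have hQj : Q j := ⟨s, hsm, hskill⟩
  classical
  obtain ⟨s₀, hs₀m, hs₀kill⟩ : Q (Nat.find ⟨j, hQj⟩) := Nat.find_spec ⟨j, hQj⟩
  have hj0 : Nat.find ⟨j, hQj⟩ ≠ 0 := by
    intro h0
    rw [h0] at hs₀kill
    have : s₀ * 1 = 0 := hs₀kill 1 (by simp)
    rw [mul_one] at this
    exact hs₀m (this ▸ m.zero_mem)
  obtain ⟨j', hj'⟩ : ∃ j', Nat.find ⟨j, hQj⟩ = j' + 1 := ⟨_, (Nat.succ_pred_eq_of_pos (Nat.pos_of_ne_zero hj0)).symm⟩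
  have hnot : ¬ Q j' := Nat.find_min ⟨j, hQj⟩ (by omega)
  -- there is w ∈ m^j' with s₀ * w ≠ 0
  have : ∃ w ∈ m ^ j', s₀ * w ≠ 0 := by
    by_contra hcon
    push_neg at hcon
    exact hnot ⟨s₀, hs₀m, hcon⟩
  obtain ⟨w, hw, hsw⟩ := this
  refine ⟨s₀ * w, hsw, ?_⟩
  intro a ha
  have haw : a * w ∈ m ^ (j' + 1) := by
    rw [pow_succ']
    exact Ideal.mul_mem_mul ha hw
  calc a * (s₀ * w) = s₀ * (a * w) := by ring
    _ = 0 := hs₀kill (a * w) (hj' ▸ haw)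

theorem stickelberger_eigenvectors
    (n : ℕ) (I : Ideal (MvPolynomial (Fin n) ℂ))
    (hfd : FiniteDimensional ℂ (MvPolynomial (Fin n) ℂ ⧸ I))
    (lam : Fin n → ℂ) :
    (∀ g ∈ I, MvPolynomial.eval lam g = 0) ↔
      ∃ v : MvPolynomial (Fin n) ℂ ⧸ I, v ≠ 0 ∧
        ∀ i : Fin n,
          LinearMap.mulLeft ℂ (Ideal.Quotient.mk I (MvPolynomial.X i)) v
            = lam i • v := by
  have hsmul : ∀ (a : ℂ) (w : MvPolynomial (Fin n) ℂ ⧸ I),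
      a • w = Ideal.Quotient.mk I (MvPolynomial.C a) * w := by
    intro a w
    obtain ⟨x, rfl⟩ := Ideal.Quotient.mk_surjective w
    rw [← map_mul, ← MvPolynomial.smul_eq_C_mul]
    rfl
  constructor
  · intro h
    -- the evaluation map descends to ψ : A →+* ℂ
    let ψ : MvPolynomial (Fin n) ℂ ⧸ I →+* ℂ := Ideal.Quotient.lift I (MvPolynomial.eval lam) h
    have hψmk : ∀ p : MvPolynomial (Fin n) ℂ,
        ψ (Ideal.Quotient.mk I p) = MvPolynomial.eval lam p := fun p =>
      Ideal.Quotient.lift_mk I _ _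
    have hψsurj : Function.Surjective ψ := fun c =>
      ⟨Ideal.Quotient.mk I (MvPolynomial.C c), by rw [hψmk, MvPolynomial.eval_C]⟩
    haveI : (RingHom.ker ψ).IsMaximal := RingHom.ker_isMaximal_of_surjective ψ hψsurj
    haveI : IsArtinianRing (MvPolynomial (Fin n) ℂ ⧸ I) :=
      isArtinian_of_tower ℂ (inferInstance : IsArtinian ℂ (MvPolynomial (Fin n) ℂ ⧸ I))
    haveI : IsNoetherianRing (MvPolynomial (Fin n) ℂ ⧸ I) :=
      isNoetherian_of_tower ℂ (inferInstance : IsNoetherian ℂ (MvPolynomial (Fin n) ℂ ⧸ I))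
    obtain ⟨v, hv, hkill⟩ := exists_ne_zero_mul_eq_zero_of_isMaximal (RingHom.ker ψ)
    refine ⟨v, hv, ?_⟩
    intro i
    have hmem : Ideal.Quotient.mk I (MvPolynomial.X i - MvPolynomial.C (lam i))
        ∈ RingHom.ker ψ := by
      rw [RingHom.mem_ker, hψmk, map_sub, MvPolynomial.eval_X, MvPolynomial.eval_C, sub_self]
    have h2 := hkill _ hmem
    rw [map_sub, sub_mul, sub_eq_zero] at h2
    rw [LinearMap.mulLeft_apply, h2, ← hsmul]
  · rintro ⟨v, hv, heig⟩
    -- key: mk p * v = mk (C (eval lam p)) * v for all p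
    have key : ∀ p : MvPolynomial (Fin n) ℂ,
        (Ideal.Quotient.mk I p) * v
          = (Ideal.Quotient.mk I (MvPolynomial.C (MvPolynomial.eval lam p))) * v := by
      intro p
      induction p using MvPolynomial.induction_on with
      | C a => rw [MvPolynomial.eval_C]
      | add p q hp hq =>
        rw [map_add, add_mul, hp, hq, map_add, MvPolynomial.C_add, map_add, add_mul]
      | mul_X p i hp =>
        have hXi : (Ideal.Quotient.mk I (MvPolynomial.X i)) * v
            = (Ideal.Quotient.mk I (MvPolynomial.C (lam i))) * v := by
          have h3 := heig i
          rwa [LinearMap.mulLeft_apply, hsmul] at h3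
        calc (Ideal.Quotient.mk I) (p * MvPolynomial.X i) * v
            = (Ideal.Quotient.mk I p) * ((Ideal.Quotient.mk I) (MvPolynomial.X i) * v) := by
              rw [map_mul, mul_assoc]
          _ = (Ideal.Quotient.mk I p) * ((Ideal.Quotient.mk I) (MvPolynomial.C (lam i)) * v) := by
              rw [hXi]
          _ = (Ideal.Quotient.mk I) (MvPolynomial.C (lam i)) * ((Ideal.Quotient.mk I p) * v) := by
              ring
          _ = (Ideal.Quotient.mk I) (MvPolynomial.C (lam i))
                * ((Ideal.Quotient.mk I) (MvPolynomial.C (MvPolynomial.eval lam p)) * v) := by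
              rw [hp]
          _ = (Ideal.Quotient.mk I) (MvPolynomial.C (MvPolynomial.eval lam (p * MvPolynomial.X i)))
                * v := by
              rw [map_mul, MvPolynomial.eval_X, MvPolynomial.C_mul, map_mul]; ring
    intro g hg
    have h0 : (Ideal.Quotient.mk I g) = 0 := Ideal.Quotient.eq_zero_iff_mem.mpr hg
    have h1 := key g
    rw [h0, zero_mul, ← hsmul] at h1
    rcases smul_eq_zero.mp h1.symm with h | h
    · exact h
    · exact absurd h hv
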